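/- Let p ≥ 2, s ∈ (0,1), N ≥ 1, p' = p/(p-1). Define A(u)(x,y) = |u(x)-u(y)|^{p-2}(u(x)-u(y)) / |x-y|^{(N+sp)/p'}. Let w ∈ D^{s,p}(ℝᴺ) and {z_n} ⊂ D^{s,p}(ℝᴺ) with z_n → 0 a.e. in ℝᴺ and [z_n]_{s,p} ≤ C. Then ∬_{ℝ^{2N}} |A(z_n + w) - A(z_n) - A(w)|^{p'} dx dy → 0 as n → ∞. -/

import Mathlib

open Real MeasureTheory Filter Topology
open scoped ENNReal

/-- The operator `A(u)(x,y) = |u(x)-u(y)|^{p-2}(u(x)-u(y)) / |x-y|^{(N+sp)/p'}`. -/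
noncomputable def fracA (N : ℕ) (s p p' : ℝ)
    (v : EuclideanSpace ℝ (Fin N) → ℝ) (x y : EuclideanSpace ℝ (Fin N)) : ℝ :=
  |v x - v y| ^ (p - 2) * (v x - v y) / dist x y ^ (((N : ℝ) + s * p) / p')

section Helpers

/-- auxiliary power function -/
noncomputable def phi (r t : ℝ) : ℝ := |t| ^ r * t

lemma phi_zero (r : ℝ) : phi r 0 = 0 := by simp [phi]

lemma phi_cont {r : ℝ} (hr : 0 ≤ r) : Continuous (phi r) :=
  (continuous_abs.rpow_const fun _ => Or.inr hr).mul continuous_id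

lemma phi_one {r : ℝ} : phi r 1 = 1 := by simp [phi]

lemma phi_neg_one {r : ℝ} : phi r (-1) = -1 := by simp [phi]

lemma abs_phi {r : ℝ} (hr : 0 ≤ r) (t : ℝ) : |phi r t| = |t| ^ (r + 1) := by
  rcases eq_or_ne t 0 with h | h
  · rw [h, phi_zero, abs_zero]
    exact (Real.zero_rpow (by linarith : (r : ℝ) + 1 ≠ 0)).symm
  · rw [phi, abs_mul, abs_of_nonneg (Real.rpow_nonneg (abs_nonneg t) r),
      Real.rpow_add_one (abs_ne_zero.2 h)]

lemma phi_homog {r : ℝ} (hr : 0 ≤ r) {c : ℝ} (hc : 0 ≤ c) (t : ℝ) :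
    phi r (c * t) = c ^ (r + 1) * phi r t := by
  rcases eq_or_lt_of_le hc with h | h
  · rw [← h, zero_mul, phi_zero, Real.zero_rpow (by linarith), zero_mul]
  · rw [phi, phi, abs_mul, abs_of_pos h, Real.mul_rpow h.le (abs_nonneg t),
      Real.rpow_add_one h.ne']
    ring

lemma phi_ineq {r : ℝ} (hr : 0 ≤ r) {ε : ℝ} (hε : 0 < ε) :
    ∃ K : ℝ, 0 ≤ K ∧ ∀ a b : ℝ,
      |phi r (a + b) - phi r a - phi r b| ≤ ε * |a| ^ (r + 1) + K * |b| ^ (r + 1) := by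
  have hq1 : (1 : ℝ) ≤ r + 1 := by linarith
  have hq0 : (0 : ℝ) ≤ r + 1 := by linarith
  obtain ⟨δ₁, hδ₁pos, hδ₁⟩ := Metric.continuousAt_iff.1 ((phi_cont hr).continuousAt
    (x := (1 : ℝ))) (ε / 2) (by linarith)
  obtain ⟨δ₂, hδ₂pos, hδ₂⟩ := Metric.continuousAt_iff.1 ((phi_cont hr).continuousAt
    (x := (-1 : ℝ))) (ε / 2) (by linarith)
  set δ : ℝ := min (min δ₁ δ₂) (min (1 / 2) (min 1 (ε / 2))) with hδdef
  have hδpos : 0 < δ := by positivity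
  have hδhalf : δ ≤ 1 / 2 := (min_le_right _ _).trans ((min_le_left _ _))
  have hδ1' : δ ≤ δ₁ := (min_le_left _ _).trans (min_le_left _ _)
  have hδ2' : δ ≤ δ₂ := (min_le_left _ _).trans (min_le_right _ _)
  have hδεq : δ ^ (r + 1) ≤ ε / 2 := by
    have hδ1 : δ ≤ 1 := hδhalf.trans (by norm_num)
    have hδε : δ ≤ ε / 2 := (min_le_right _ _).trans ((min_le_right _ _).trans (min_le_right _ _))
    calc δ ^ (r + 1) ≤ δ ^ (1 : ℝ) := Real.rpow_le_rpow_of_exponent_ge hδpos hδ1 hq1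
      _ = δ := Real.rpow_one δ
      _ ≤ ε / 2 := hδε
  set K : ℝ := (2 ^ (r + 1) + 2) / δ ^ (r + 1) with hKdef
  have hδq : (0 : ℝ) < δ ^ (r + 1) := Real.rpow_pos_of_pos hδpos _
  have hK0 : 0 ≤ K := by positivity
  refine ⟨K, hK0, ?_⟩
  have key : ∀ a b : ℝ, max |a| |b| = 1 →
      |phi r (a + b) - phi r a - phi r b| ≤ ε * |a| ^ (r + 1) + K * |b| ^ (r + 1) := by
    intro a b hmax
    have ha1 : |a| ≤ 1 := hmax ▸ le_max_left _ _
    have hb1 : |b| ≤ 1 := hmax ▸ le_max_right _ _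
    by_cases hb : δ ≤ |b|
    · have h1 : |phi r (a + b) - phi r a - phi r b| ≤ 2 ^ (r + 1) + 2 := by
        calc |phi r (a + b) - phi r a - phi r b|
            ≤ |phi r (a + b) - phi r a| + |phi r b| := abs_sub _ _
          _ ≤ (|phi r (a + b)| + |phi r a|) + |phi r b| := by
              exact add_le_add_left (abs_sub _ _) _
          _ = (|a + b| ^ (r + 1) + |a| ^ (r + 1)) + |b| ^ (r + 1) := by
              rw [abs_phi hr, abs_phi hr, abs_phi hr]
          _ ≤ (2 ^ (r + 1) + 1) + 1 := by
              have e1 : |a + b| ^ (r + 1) ≤ 2 ^ (r + 1) :=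
                Real.rpow_le_rpow (abs_nonneg _) ((abs_add_le a b).trans (by linarith)) hq0
              have e2 : |a| ^ (r + 1) ≤ 1 := Real.rpow_le_one (abs_nonneg _) ha1 hq0
              have e3 : |b| ^ (r + 1) ≤ 1 := Real.rpow_le_one (abs_nonneg _) hb1 hq0
              linarith
          _ = 2 ^ (r + 1) + 2 := by ring
      have h2 : 2 ^ (r + 1) + 2 ≤ K * |b| ^ (r + 1) := by
        have e1 : δ ^ (r + 1) ≤ |b| ^ (r + 1) := Real.rpow_le_rpow hδpos.le hb hq0
        have e2 : K * δ ^ (r + 1) ≤ K * |b| ^ (r + 1) := by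
          exact mul_le_mul_of_nonneg_left e1 hK0
        rw [hKdef, div_mul_cancel₀ _ hδq.ne'] at e2
        exact e2
      have h3 : 0 ≤ ε * |a| ^ (r + 1) := by positivity
      linarith
    · push_neg at hb
      have ha : |a| = 1 := by
        rcases max_choice |a| |b| with h | h
        · rw [h] at hmax; exact hmax
        · rw [h] at hmax; rw [hmax] at hb; linarith
      have hstep : |phi r (a + b) - phi r a| < ε / 2 := by
        rcases (abs_eq (by norm_num : (0:ℝ) ≤ 1)).1 ha with h1 | h1
        · have := hδ₁ (x := a + b) (by
            rw [Real.dist_eq, h1]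
            simpa using lt_of_lt_of_le hb hδ1')
          rw [Real.dist_eq] at this
          rw [h1] at *
          simpa [phi_one] using this
        · have := hδ₂ (x := a + b) (by
            rw [Real.dist_eq, h1]
            simpa [add_comm] using lt_of_lt_of_le hb hδ2')
          rw [Real.dist_eq] at this
          rw [h1] at *
          simpa [phi_neg_one] using this
      have hb' : |phi r b| ≤ ε / 2 := by
        rw [abs_phi hr]
        calc |b| ^ (r + 1) ≤ δ ^ (r + 1) := Real.rpow_le_rpow (abs_nonneg _) hb.le hq0
          _ ≤ ε / 2 := hδεq
      have : |phi r (a + b) - phi r a - phi r b| ≤ |phi r (a + b) - phi r a| + |phi r b| :=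
        abs_sub _ _
      have hεa : ε * |a| ^ (r + 1) = ε := by rw [ha, Real.one_rpow, mul_one]
      have hKb : 0 ≤ K * |b| ^ (r + 1) := by positivity
      rw [hεa]
      linarith
  intro a b
  set M : ℝ := max |a| |b| with hM
  have hM0 : 0 ≤ M := le_trans (abs_nonneg a) (le_max_left _ _)
  rcases eq_or_lt_of_le hM0 with h0 | hMpos
  · have ha0 : a = 0 := by
      have h1 : |a| ≤ M := le_max_left _ _
      rw [← h0] at h1
      simpa using le_antisymm h1 (abs_nonneg a)
    have hb0 : b = 0 := by
      have h1 : |b| ≤ M := le_max_right _ _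
      rw [← h0] at h1
      simpa using le_antisymm h1 (abs_nonneg b)
    rw [ha0, hb0]
    simp [phi_zero]
    positivity
  · have hMne : M ≠ 0 := hMpos.ne'
    have h1 : max |a / M| |b / M| = 1 := by
      rw [abs_div, abs_div, abs_of_pos hMpos, max_div_div_right hM0 |a| |b|, ← hM,
        div_self hMne]
    have key' := key (a / M) (b / M) h1
    have hMq : (0:ℝ) < M ^ (r + 1) := Real.rpow_pos_of_pos hMpos _
    have e0 : a / M + b / M = (a + b) / M := (add_div a b M).symm
    have eφ : ∀ u : ℝ, phi r u = M ^ (r + 1) * phi r (u / M) := by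
      intro u
      rw [← phi_homog hr hM0 (u / M), mul_div_cancel₀ u hMne]
    have eabs : ∀ u : ℝ, |u| ^ (r + 1) = M ^ (r + 1) * |u / M| ^ (r + 1) := by
      intro u
      rw [abs_div, abs_of_pos hMpos, Real.div_rpow (abs_nonneg u) hM0,
        mul_div_cancel₀ _ hMq.ne']
    calc |phi r (a + b) - phi r a - phi r b|
        = M ^ (r + 1) * |phi r ((a + b) / M) - phi r (a / M) - phi r (b / M)| := by
          rw [eφ (a + b), eφ a, eφ b, ← mul_sub, ← mul_sub, abs_mul,
            abs_of_nonneg hMq.le]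
      _ ≤ M ^ (r + 1) * (ε * |a / M| ^ (r + 1) + K * |b / M| ^ (r + 1)) := by
          rw [e0] at key'
          exact mul_le_mul_of_nonneg_left key' hMq.le
      _ = ε * |a| ^ (r + 1) + K * |b| ^ (r + 1) := by
          rw [eabs a, eabs b]; ring

/-- Dominated convergence to zero for lower Lebesgue integrals, with no measurability
assumption on the functions or on the dominating function. -/
lemma dct0 {α : Type*} [MeasurableSpace α] {μ : Measure α} {f : ℕ → α → ℝ≥0∞} {g : α → ℝ≥0∞}
    (hfg : ∀ n x, f n x ≤ g x) (hg : ∫⁻ x, g x ∂μ ≠ ⊤)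
    (hlim : ∀ᵐ x ∂μ, g x = ⊤ ∨ Tendsto (fun n => f n x) atTop (𝓝 0)) :
    Tendsto (fun n => ∫⁻ x, f n x ∂μ) atTop (𝓝 0) := by
  choose m hm hmle hmint using fun n => exists_measurable_le_lintegral_eq μ (f n)
  set t : ℕ → α → ℝ≥0∞ := fun n x => ⨆ k, m (k + n) x with ht
  have htmeas : ∀ n, Measurable (t n) := fun n => Measurable.iSup fun k => hm _
  have htanti : Antitone t := by
    refine antitone_nat_of_succ_le fun n x => iSup_le fun k => ?_
    have e : k + (n + 1) = (k + 1) + n := by ring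
    rw [e]
    exact le_iSup (fun j => m (j + n) x) (k + 1)
  have htle : ∀ n x, t n x ≤ g x := fun n x => iSup_le fun k => (hmle _ x).trans (hfg _ x)
  have ht0 : ∫⁻ x, t 0 x ∂μ ≠ ⊤ :=
    ((lintegral_mono fun x => htle 0 x).trans_lt hg.lt_top).ne
  have hT0 : ∀ x, Tendsto (fun n => f n x) atTop (𝓝 0) → (⨅ n, t n x) = 0 := by
    intro x hx
    have hle : ∀ δ : ℝ≥0∞, 0 < δ → (⨅ n, t n x) ≤ δ := by
      intro δ hδ
      obtain ⟨n₀, hn₀⟩ := Filter.eventually_atTop.1 (ENNReal.tendsto_nhds_zero.1 hx δ hδ)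
      refine (iInf_le _ n₀).trans (iSup_le fun k => ?_)
      exact (hmle _ x).trans (hn₀ _ (Nat.le_add_left n₀ k))
    refine le_antisymm ?_ zero_le
    refine ENNReal.le_of_forall_pos_le_add fun ε hε _ => ?_
    simpa using hle ε (by exact_mod_cast hε)
  have hTmeas : Measurable fun x => ⨅ n, t n x := Measurable.iInf htmeas
  have hTae : (fun x => ⨅ n, t n x) =ᵐ[μ] 0 := by
    set u : Set α := {x | ¬ (g x = ⊤ ∨ Tendsto (fun n => f n x) atTop (𝓝 0))} with hu
    have hunull : μ u = 0 := by simpa [u] using (ae_iff.1 hlim)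
    set uu := toMeasurable μ u with huu
    have hE : MeasurableSet {x | ¬ (⨅ n, t n x) = 0} :=
      (hTmeas (measurableSet_singleton 0)).compl
    have hdiffsub : {x | ¬ (⨅ n, t n x) = 0} \ uu ⊆ {x | g x = ⊤} := by
      rintro x ⟨hx1, hx2⟩
      have hxu : x ∉ u := fun h => hx2 (subset_toMeasurable μ u h)
      rcases not_not.1 (fun h => hxu h) with h | h
      · exact h
      · exact absurd (hT0 x h) hx1
    have hdiff0 : μ ({x | ¬ (⨅ n, t n x) = 0} \ uu) = 0 := by
      by_contra hne
      have hmeasd : MeasurableSet ({x | ¬ (⨅ n, t n x) = 0} \ uu) :=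
        hE.diff (measurableSet_toMeasurable μ u)
      have : (⊤ : ℝ≥0∞) * μ ({x | ¬ (⨅ n, t n x) = 0} \ uu) ≤ ∫⁻ x, g x ∂μ := by
        calc (⊤ : ℝ≥0∞) * μ ({x | ¬ (⨅ n, t n x) = 0} \ uu)
            = ∫⁻ x, ({x | ¬ (⨅ n, t n x) = 0} \ uu).indicator (fun _ => ⊤) x ∂μ := by
              rw [lintegral_indicator hmeasd, setLIntegral_const, mul_comm]
          _ ≤ ∫⁻ x, g x ∂μ := by
              refine lintegral_mono fun x => ?_
              by_cases hx : x ∈ {x | ¬ (⨅ n, t n x) = 0} \ uu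
              · rw [Set.indicator_of_mem hx]
                exact le_of_eq (hdiffsub hx).symm
              · simp [Set.indicator_of_notMem hx]
      rw [ENNReal.top_mul hne] at this
      exact hg (top_le_iff.1 this)
    have : μ {x | ¬ (⨅ n, t n x) = 0} = 0 := by
      have hsub : {x | ¬ (⨅ n, t n x) = 0} ⊆ ({x | ¬ (⨅ n, t n x) = 0} \ uu) ∪ uu := by
        intro x hx; by_cases h : x ∈ uu
        · exact Or.inr h
        · exact Or.inl ⟨hx, h⟩
      refine le_antisymm ?_ zero_le
      calc μ {x | ¬ (⨅ n, t n x) = 0} ≤ μ (({x | ¬ (⨅ n, t n x) = 0} \ uu) ∪ uu) :=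
            measure_mono hsub
        _ ≤ μ ({x | ¬ (⨅ n, t n x) = 0} \ uu) + μ uu := measure_union_le _ _
        _ = 0 := by rw [hdiff0, measure_toMeasurable, hunull, add_zero]
    exact ae_iff.2 (by simpa using this)
  have hint0 : ∫⁻ x, (⨅ n, t n x) ∂μ = 0 := by
    rw [lintegral_congr_ae hTae]; simp
  have hiInf : (⨅ n, ∫⁻ x, t n x ∂μ) = 0 := by
    rw [← lintegral_iInf htmeas htanti ht0, hint0]
  have hmono : Antitone fun n => ∫⁻ x, t n x ∂μ := fun i j hij =>
    lintegral_mono fun x => htanti hij x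
  have htt : Tendsto (fun n => ∫⁻ x, t n x ∂μ) atTop (𝓝 0) := by
    have := tendsto_atTop_iInf hmono
    rwa [hiInf] at this
  refine tendsto_of_tendsto_of_tendsto_of_le_of_le tendsto_const_nhds htt
    (fun n => zero_le) fun n => ?_
  rw [hmint n]
  refine lintegral_mono fun x => ?_
  have := le_iSup (fun k => m (k + n) x) 0
  simpa using this

/-- `(u+v)^c ≤ 2^c u^c + 2^c v^c` for nonnegative reals. -/
lemma rpow_add_le_two_rpow {u v c : ℝ} (hu : 0 ≤ u) (hv : 0 ≤ v) (hc : 0 ≤ c) :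
    (u + v) ^ c ≤ 2 ^ c * u ^ c + 2 ^ c * v ^ c := by
  have h1 : u + v ≤ 2 * max u v := by
    rcases max_cases u v with ⟨h, h'⟩ | ⟨h, h'⟩ <;> rw [h] <;> linarith
  have h2 : (u + v) ^ c ≤ (2 * max u v) ^ c :=
    Real.rpow_le_rpow (by linarith) h1 hc
  have h3 : (2 * max u v) ^ c = 2 ^ c * (max u v) ^ c :=
    Real.mul_rpow (by norm_num) (le_max_of_le_left hu)
  have h4 : (max u v) ^ c ≤ u ^ c + v ^ c := by
    rcases max_cases u v with ⟨h, _⟩ | ⟨h, _⟩ <;> rw [h]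
    · exact le_add_of_nonneg_right (Real.rpow_nonneg hv c)
    · exact le_add_of_nonneg_left (Real.rpow_nonneg hu c)
  calc (u + v) ^ c ≤ 2 ^ c * (max u v) ^ c := h3 ▸ h2
    _ ≤ 2 ^ c * (u ^ c + v ^ c) :=
        mul_le_mul_of_nonneg_left h4 (Real.rpow_nonneg (by norm_num) c)
    _ = 2 ^ c * u ^ c + 2 ^ c * v ^ c := by ring

/-- Bochner integral of a nonnegative function is at most the `toReal` of the lintegral,
with no measurability/integrability assumptions. -/
lemma integral_le_toReal_lintegral {α : Type*} [MeasurableSpace α] {μ : Measure α}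
    {f : α → ℝ} (hf : ∀ x, 0 ≤ f x) :
    ∫ x, f x ∂μ ≤ (∫⁻ x, ENNReal.ofReal (f x) ∂μ).toReal := by
  by_cases h : Integrable f μ
  · rw [integral_eq_lintegral_of_nonneg_ae (Eventually.of_forall hf) h.aestronglyMeasurable]
  · rw [integral_undef h]
    exact ENNReal.toReal_nonneg

lemma ofReal_integral_le_lintegral {α : Type*} [MeasurableSpace α] {μ : Measure α}
    {f : α → ℝ} (hf : ∀ x, 0 ≤ f x) :
    ENNReal.ofReal (∫ x, f x ∂μ) ≤ ∫⁻ x, ENNReal.ofReal (f x) ∂μ :=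
  (ENNReal.ofReal_le_ofReal (integral_le_toReal_lintegral hf)).trans ENNReal.ofReal_toReal_le

end Helpers

theorem stmt14 (N : ℕ) (hN : 1 ≤ N) (s p p' : ℝ) (hs : s ∈ Set.Ioo (0:ℝ) 1)
    (hp : 2 ≤ p) (hp' : p' = p / (p - 1))
    (w : EuclideanSpace ℝ (Fin N) → ℝ)
    (hw : (∫⁻ x, ∫⁻ y,
        ENNReal.ofReal (|w x - w y| ^ p / dist x y ^ ((N : ℝ) + s * p))) < ⊤)
    (z : ℕ → EuclideanSpace ℝ (Fin N) → ℝ)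
    (hzmeas : ∀ n, AEStronglyMeasurable (z n) volume)
    (C : ℝ≥0∞) (hC : C ≠ ⊤)
    (hzbdd : ∀ n,
      (∫⁻ x, ∫⁻ y,
          ENNReal.ofReal (|z n x - z n y| ^ p / dist x y ^ ((N : ℝ) + s * p))) ≤ C)
    (hae : ∀ᵐ x ∂(volume : Measure (EuclideanSpace ℝ (Fin N))),
      Tendsto (fun n => z n x) atTop (𝓝 0)) :
    Tendsto (fun n => ∫ x, ∫ y,
        |fracA N s p p' (fun t => z n t + w t) x y -
          fracA N s p p' (z n) x y - fracA N s p p' w x y| ^ p')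
      atTop (𝓝 0) := by
  classical
  have hspos : 0 < s := hs.1
  have hp0 : (0:ℝ) < p := by linarith
  have hpm1 : (0:ℝ) < p - 1 := by linarith
  have hr : (0:ℝ) ≤ p - 2 := by linarith
  have hp'pos : 0 < p' := by rw [hp']; positivity
  have hp'ne : p' ≠ 0 := hp'pos.ne'
  have hdd0 : (0:ℝ) ≤ (N:ℝ) + s * p := by positivity
  set α : ℝ := ((N:ℝ) + s * p) / p' with hα
  set dd : ℝ := (N:ℝ) + s * p with hdd
  have er : (p - 2) + 1 = p - 1 := by ring
  -- basic identities for fracA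
  have fracA_eq : ∀ (v : EuclideanSpace ℝ (Fin N) → ℝ) (x y : EuclideanSpace ℝ (Fin N)),
      fracA N s p p' v x y = phi (p - 2) (v x - v y) / dist x y ^ α := fun v x y => rfl
  have abs_fracA : ∀ (v : EuclideanSpace ℝ (Fin N) → ℝ) (x y : EuclideanSpace ℝ (Fin N)),
      |fracA N s p p' v x y| = |phi (p - 2) (v x - v y)| / dist x y ^ α := by
    intro v x y
    rw [fracA_eq, abs_div, abs_of_nonneg (Real.rpow_nonneg dist_nonneg α)]
  have pow_fracA : ∀ (v : EuclideanSpace ℝ (Fin N) → ℝ) (x y : EuclideanSpace ℝ (Fin N)),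
      |fracA N s p p' v x y| ^ p' = |v x - v y| ^ p / dist x y ^ dd := by
    intro v x y
    rw [abs_fracA, abs_phi hr, er,
      Real.div_rpow (Real.rpow_nonneg (abs_nonneg _) _) (Real.rpow_nonneg dist_nonneg _),
      ← Real.rpow_mul (abs_nonneg _), ← Real.rpow_mul dist_nonneg]
    congr 2
    · rw [hp']; field_simp
    · rw [hα]; field_simp
  -- the difference function
  set Gd : ℕ → EuclideanSpace ℝ (Fin N) → EuclideanSpace ℝ (Fin N) → ℝ := fun n x y =>
    fracA N s p p' (fun t => z n t + w t) x y - fracA N s p p' (z n) x y -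
      fracA N s p p' w x y with hGd
  have Gd_eq : ∀ n (x y : EuclideanSpace ℝ (Fin N)), Gd n x y =
      (phi (p - 2) ((z n x - z n y) + (w x - w y)) - phi (p - 2) (z n x - z n y) -
        phi (p - 2) (w x - w y)) / dist x y ^ α := by
    intro n x y
    rw [hGd]
    simp only [fracA_eq]
    rw [div_sub_div_same, div_sub_div_same]
    congr 2
    have e1 : (fun t => z n t + w t) x - (fun t => z n t + w t) y
        = (z n x - z n y) + (w x - w y) := by simp; ring
    rw [e1]
  -- the iterated lintegral
  set L : ℕ → ℝ≥0∞ := fun n => ∫⁻ x, ∫⁻ y, ENNReal.ofReal (|Gd n x y| ^ p') with hL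
  -- MAIN STEP : L tends to zero
  have hLtend : Tendsto L atTop (𝓝 0) := by
    rw [ENNReal.tendsto_nhds_zero]
    intro δ hδ
    have hhalf : (0:ℝ≥0∞) < δ / 2 := ENNReal.half_pos hδ.ne'
    -- choose ε with ofReal(2^p' ε^p') * C < δ/2
    have hmulC : Tendsto (fun e : ℝ => ENNReal.ofReal (2 ^ p' * e ^ p') * C)
        (𝓝[>] (0:ℝ)) (𝓝 0) := by
      have h1 : Tendsto (fun e : ℝ => e ^ p') (𝓝[>] (0:ℝ)) (𝓝 0) := by
        have h := (Real.continuousAt_rpow_const 0 p' (Or.inr hp'pos.le)).tendsto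
        rw [Real.zero_rpow hp'ne] at h
        exact h.mono_left nhdsWithin_le_nhds
      have h2 : Tendsto (fun e : ℝ => ENNReal.ofReal (2 ^ p' * e ^ p'))
          (𝓝[>] (0:ℝ)) (𝓝 0) := by
        have h3 : Tendsto (fun e : ℝ => 2 ^ p' * e ^ p') (𝓝[>] (0:ℝ)) (𝓝 0) := by
          simpa using h1.const_mul ((2:ℝ) ^ p')
        have := (ENNReal.continuous_ofReal.tendsto 0).comp h3
        simpa [Function.comp_def] using this
      have := ENNReal.Tendsto.mul_const h2 (Or.inr hC)
      simpa using this
    obtain ⟨ε, hεb, hεpos⟩ :=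
      ((hmulC.eventually_lt_const hhalf).and self_mem_nhdsWithin).exists
    obtain ⟨K, hK0, hKineq⟩ := phi_ineq hr hεpos
    -- the max-truncated function
    set h : ℕ → EuclideanSpace ℝ (Fin N) → EuclideanSpace ℝ (Fin N) → ℝ := fun n x y =>
      max (|Gd n x y| - ε * |fracA N s p p' (z n) x y|) 0 with hh
    have hnonneg : ∀ n (x y : EuclideanSpace ℝ (Fin N)), 0 ≤ h n x y := fun n x y => le_max_right _ _
    -- |Gd| ≤ ε |A z| + K |A w| pointwise
    have habs : ∀ n (x y : EuclideanSpace ℝ (Fin N)), |Gd n x y| ≤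
        ε * |fracA N s p p' (z n) x y| + K * |fracA N s p p' w x y| := by
      intro n x y
      rw [Gd_eq, abs_div, abs_of_nonneg (Real.rpow_nonneg dist_nonneg α),
        abs_fracA, abs_fracA, ← mul_div_assoc, ← mul_div_assoc, ← add_div]
      rcases eq_or_lt_of_le (Real.rpow_nonneg (dist_nonneg (x := x) (y := y)) α) with hd | hd
      · rw [← hd, div_zero, div_zero]
      · rw [div_le_div_iff_of_pos_right hd]
        have := hKineq (z n x - z n y) (w x - w y)
        rw [er] at this
        rw [abs_phi hr, abs_phi hr, er]
        exact this
    have hdom : ∀ n (x y : EuclideanSpace ℝ (Fin N)), h n x y ≤ K * |fracA N s p p' w x y| := by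
      intro n x y
      refine max_le ?_ (by positivity)
      have := habs n x y
      linarith
    -- pointwise splitting estimate
    have hpoint : ∀ n (x y : EuclideanSpace ℝ (Fin N)), ENNReal.ofReal (|Gd n x y| ^ p') ≤
        ENNReal.ofReal ((2 ^ p' * ε ^ p') * (|z n x - z n y| ^ p / dist x y ^ dd)) +
          ENNReal.ofReal (2 ^ p' * h n x y ^ p') := by
      intro n x y
      have h1 : |Gd n x y| ≤ ε * |fracA N s p p' (z n) x y| + h n x y := by
        have h2 : |Gd n x y| - ε * |fracA N s p p' (z n) x y| ≤ h n x y :=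
          le_max_left _ _
        linarith
      have h2 : |Gd n x y| ^ p' ≤
          (ε * |fracA N s p p' (z n) x y| + h n x y) ^ p' :=
        Real.rpow_le_rpow (abs_nonneg _) h1 hp'pos.le
      have h3 := rpow_add_le_two_rpow
        (mul_nonneg hεpos.le (abs_nonneg (fracA N s p p' (z n) x y)))
        (hnonneg n x y) hp'pos.le
      have h4 : (ε * |fracA N s p p' (z n) x y|) ^ p'
          = ε ^ p' * (|z n x - z n y| ^ p / dist x y ^ dd) := by
        rw [Real.mul_rpow hεpos.le (abs_nonneg _), pow_fracA]
      have h5 : |Gd n x y| ^ p' ≤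
          (2 ^ p' * ε ^ p') * (|z n x - z n y| ^ p / dist x y ^ dd) +
            2 ^ p' * h n x y ^ p' := by
        calc |Gd n x y| ^ p' ≤ (ε * |fracA N s p p' (z n) x y| + h n x y) ^ p' := h2
          _ ≤ 2 ^ p' * (ε * |fracA N s p p' (z n) x y|) ^ p' + 2 ^ p' * h n x y ^ p' := h3
          _ = (2 ^ p' * ε ^ p') * (|z n x - z n y| ^ p / dist x y ^ dd) +
              2 ^ p' * h n x y ^ p' := by rw [h4]; ring
      calc ENNReal.ofReal (|Gd n x y| ^ p')
          ≤ ENNReal.ofReal ((2 ^ p' * ε ^ p') * (|z n x - z n y| ^ p / dist x y ^ dd) +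
              2 ^ p' * h n x y ^ p') := ENNReal.ofReal_le_ofReal h5
        _ = _ := by
            rw [ENNReal.ofReal_add (by positivity) (by positivity)]
    -- the remainder term and its convergence
    set R : ℕ → ℝ≥0∞ := fun n => ∫⁻ x, ∫⁻ y, ENNReal.ofReal (h n x y ^ p') with hR
    set gin : EuclideanSpace ℝ (Fin N) → EuclideanSpace ℝ (Fin N) → ℝ≥0∞ := fun x y =>
      ENNReal.ofReal (K ^ p' * (|w x - w y| ^ p / dist x y ^ dd)) with hgin
    have hdom' : ∀ n (x y : EuclideanSpace ℝ (Fin N)), ENNReal.ofReal (h n x y ^ p') ≤ gin x y := by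
      intro n x y
      apply ENNReal.ofReal_le_ofReal
      calc h n x y ^ p' ≤ (K * |fracA N s p p' w x y|) ^ p' :=
            Real.rpow_le_rpow (hnonneg n x y) (hdom n x y) hp'pos.le
        _ = K ^ p' * |fracA N s p p' w x y| ^ p' := Real.mul_rpow hK0 (abs_nonneg _)
        _ = K ^ p' * (|w x - w y| ^ p / dist x y ^ dd) := by rw [pow_fracA]
    have hginint : (∫⁻ x, ∫⁻ y, gin x y) =
        ENNReal.ofReal (K ^ p') *
          ∫⁻ x, ∫⁻ y, ENNReal.ofReal (|w x - w y| ^ p / dist x y ^ dd) := by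
      have e : ∀ (x y : EuclideanSpace ℝ (Fin N)), gin x y = ENNReal.ofReal (K ^ p') *
          ENNReal.ofReal (|w x - w y| ^ p / dist x y ^ dd) := by
        intro x y
        rw [hgin]
        exact ENNReal.ofReal_mul (Real.rpow_nonneg hK0 p')
      simp_rw [e, lintegral_const_mul' _ _ ENNReal.ofReal_ne_top]
    have hginfin : (∫⁻ x, ∫⁻ y, gin x y) ≠ ⊤ := by
      rw [hginint]
      exact ENNReal.mul_ne_top ENNReal.ofReal_ne_top hw.ne
    have hRlim : Tendsto R atTop (𝓝 0) := by
      refine dct0 (g := fun x => ∫⁻ y, gin x y)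
        (fun n x => lintegral_mono fun y => hdom' n x y) hginfin ?_
      filter_upwards [hae] with x hx
      by_cases hgx : (∫⁻ y, gin x y) = ⊤
      · exact Or.inl hgx
      · refine Or.inr (dct0 (g := fun y => gin x y) (fun n y => hdom' n x y) hgx ?_)
        filter_upwards [hae] with y hy
        refine Or.inr ?_
        -- pointwise convergence
        have ha : Tendsto (fun n => z n x - z n y) atTop (𝓝 0) := by
          simpa using hx.sub hy
        have hphi3 : Tendsto (fun n => phi (p - 2) ((z n x - z n y) + (w x - w y)))
            atTop (𝓝 (phi (p - 2) (w x - w y))) := by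
          have := ((phi_cont hr).tendsto (0 + (w x - w y))).comp (ha.add_const (w x - w y))
          simpa [Function.comp_def] using this
        have hphi2 : Tendsto (fun n => phi (p - 2) (z n x - z n y)) atTop (𝓝 0) := by
          have := ((phi_cont hr).tendsto 0).comp ha
          simpa [phi_zero, Function.comp_def] using this
        have hGdt : Tendsto (fun n => Gd n x y) atTop (𝓝 0) := by
          have hnum : Tendsto (fun n =>
              phi (p - 2) ((z n x - z n y) + (w x - w y)) -
                phi (p - 2) (z n x - z n y) - phi (p - 2) (w x - w y)) atTop (𝓝 0) := by
            have := (hphi3.sub hphi2).sub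
              (tendsto_const_nhds (x := phi (p - 2) (w x - w y)))
            simpa using this
          have := hnum.div_const (dist x y ^ α)
          rw [zero_div] at this
          exact this.congr fun n => (Gd_eq n x y).symm
        have hAz : Tendsto (fun n => |fracA N s p p' (z n) x y|) atTop (𝓝 0) := by
          have := (hphi2.abs.div_const (dist x y ^ α))
          simp only [abs_zero, zero_div] at this
          exact this.congr fun n => (abs_fracA (z n) x y).symm
        have hmaxt : Tendsto (fun n => h n x y) atTop (𝓝 0) := by
          have h1 : Tendsto (fun n => |Gd n x y| - ε * |fracA N s p p' (z n) x y|)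
              atTop (𝓝 0) := by
            have := hGdt.abs.sub (hAz.const_mul ε)
            simpa using this
          have := h1.max (tendsto_const_nhds (x := (0:ℝ)))
          simpa using this
        have hpow : Tendsto (fun n => h n x y ^ p') atTop (𝓝 0) := by
          have := ((Real.continuousAt_rpow_const 0 p' (Or.inr hp'pos.le)).tendsto).comp hmaxt
          simpa [Real.zero_rpow hp'ne, Function.comp_def] using this
        have := (ENNReal.continuous_ofReal.tendsto 0).comp hpow
        simpa [Function.comp_def] using this
    -- split the integral
    have hLbound : ∀ n, L n ≤
        ENNReal.ofReal (2 ^ p' * ε ^ p') * C + ENNReal.ofReal (2 ^ p') * R n := by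
      intro n
      set u1 : EuclideanSpace ℝ (Fin N) → EuclideanSpace ℝ (Fin N) → ℝ≥0∞ := fun x y =>
        ENNReal.ofReal ((2 ^ p' * ε ^ p') * (|z n x - z n y| ^ p / dist x y ^ dd)) with hu1
      set u2 : EuclideanSpace ℝ (Fin N) → EuclideanSpace ℝ (Fin N) → ℝ≥0∞ := fun x y => ENNReal.ofReal (2 ^ p' * h n x y ^ p') with hu2
      have hMcont : Continuous fun t : ℝ => |t| ^ p :=
        continuous_abs.rpow_const fun _ => Or.inr hp0.le
      have hu1y : ∀ x : EuclideanSpace ℝ (Fin N), AEMeasurable (fun y => u1 x y) volume := by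
        intro x
        have hz := (hzmeas n).aemeasurable
        have h1 : AEMeasurable (fun y : EuclideanSpace ℝ (Fin N) => |z n x - z n y| ^ p) volume :=
          hMcont.measurable.comp_aemeasurable (aemeasurable_const.sub hz)
        have h2 : Measurable fun y : EuclideanSpace ℝ (Fin N) => dist x y ^ dd :=
          ((continuous_const.dist continuous_id).rpow_const fun _ => Or.inr hdd0).measurable
        exact ENNReal.measurable_ofReal.comp_aemeasurable
          (aemeasurable_const.mul (h1.div h2.aemeasurable))
      have hsplit_in : ∀ x : EuclideanSpace ℝ (Fin N), (∫⁻ y, (u1 x y + u2 x y)) =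
          (∫⁻ y, u1 x y) + ∫⁻ y, u2 x y := fun x => lintegral_add_left' (hu1y x) _
      -- outer measurability
      set z' : EuclideanSpace ℝ (Fin N) → ℝ := ((hzmeas n).aemeasurable).mk (z n) with hz'
      have hz'm : Measurable z' := ((hzmeas n).aemeasurable).measurable_mk
      have hz'ae : z n =ᵐ[volume] z' := ((hzmeas n).aemeasurable).ae_eq_mk
      have hjoint : Measurable fun q : EuclideanSpace ℝ (Fin N) × EuclideanSpace ℝ (Fin N) =>
          ENNReal.ofReal ((2 ^ p' * ε ^ p') * (|z' q.1 - z' q.2| ^ p / dist q.1 q.2 ^ dd)) := by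
        apply ENNReal.measurable_ofReal.comp
        apply Measurable.const_mul
        exact (hMcont.measurable.comp ((hz'm.comp measurable_fst).sub
          (hz'm.comp measurable_snd))).div
          ((continuous_dist.rpow_const fun _ => Or.inr hdd0).measurable)
      have hX1meas : Measurable fun x : EuclideanSpace ℝ (Fin N) => ∫⁻ y,
          ENNReal.ofReal ((2 ^ p' * ε ^ p') * (|z' x - z' y| ^ p / dist x y ^ dd)) :=
        hjoint.lintegral_prod_right'
      have hX1ae : (fun x : EuclideanSpace ℝ (Fin N) => ∫⁻ y,
          ENNReal.ofReal ((2 ^ p' * ε ^ p') * (|z' x - z' y| ^ p / dist x y ^ dd)))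
          =ᵐ[volume] fun x => ∫⁻ y, u1 x y := by
        filter_upwards [hz'ae] with x hx
        refine lintegral_congr_ae ?_
        filter_upwards [hz'ae] with y hy
        simp only [hu1]
        rw [hx, hy]
      have hX1 : AEMeasurable (fun x => ∫⁻ y, u1 x y) volume :=
        hX1meas.aemeasurable.congr hX1ae
      have hsplit : (∫⁻ x, ∫⁻ y, (u1 x y + u2 x y)) =
          (∫⁻ x, ∫⁻ y, u1 x y) + ∫⁻ x, ∫⁻ y, u2 x y := by
        have e1 : (∫⁻ x, ∫⁻ y, (u1 x y + u2 x y)) =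
            ∫⁻ x, ((∫⁻ y, u1 x y) + ∫⁻ y, u2 x y) := lintegral_congr fun x => hsplit_in x
        rw [e1]
        exact lintegral_add_left' hX1 _
      have hterm1 : (∫⁻ x, ∫⁻ y, u1 x y) ≤ ENNReal.ofReal (2 ^ p' * ε ^ p') * C := by
        have e : ∀ (x y : EuclideanSpace ℝ (Fin N)), u1 x y = ENNReal.ofReal (2 ^ p' * ε ^ p') *
            ENNReal.ofReal (|z n x - z n y| ^ p / dist x y ^ dd) := by
          intro x y
          rw [hu1]
          exact ENNReal.ofReal_mul (by positivity)
        simp_rw [e, lintegral_const_mul' _ _ ENNReal.ofReal_ne_top]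
        exact mul_le_mul_right (hzbdd n) _
      have hterm2 : (∫⁻ x, ∫⁻ y, u2 x y) = ENNReal.ofReal (2 ^ p') * R n := by
        have e : ∀ (x y : EuclideanSpace ℝ (Fin N)), u2 x y = ENNReal.ofReal (2 ^ p') *
            ENNReal.ofReal (h n x y ^ p') := by
          intro x y
          rw [hu2]
          exact ENNReal.ofReal_mul (by positivity)
        simp_rw [e, lintegral_const_mul' _ _ ENNReal.ofReal_ne_top]
        rfl
      calc L n ≤ ∫⁻ x, ∫⁻ y, (u1 x y + u2 x y) :=
            lintegral_mono fun x => lintegral_mono fun y => hpoint n x y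
        _ = (∫⁻ x, ∫⁻ y, u1 x y) + ∫⁻ x, ∫⁻ y, u2 x y := hsplit
        _ ≤ ENNReal.ofReal (2 ^ p' * ε ^ p') * C + ENNReal.ofReal (2 ^ p') * R n := by
            rw [hterm2]
            exact add_le_add hterm1 le_rfl
    -- conclude
    have hRev : ∀ᶠ n in atTop, ENNReal.ofReal (2 ^ p') * R n < δ / 2 := by
      have : Tendsto (fun n => ENNReal.ofReal (2 ^ p') * R n) atTop (𝓝 0) := by
        have h2 := ENNReal.Tendsto.const_mul (a := ENNReal.ofReal (2 ^ p')) hRlim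
          (Or.inr ENNReal.ofReal_ne_top)
        simpa using h2
      exact this.eventually_lt_const hhalf
    filter_upwards [hRev] with n hn
    calc L n ≤ ENNReal.ofReal (2 ^ p' * ε ^ p') * C + ENNReal.ofReal (2 ^ p') * R n :=
          hLbound n
      _ ≤ δ / 2 + δ / 2 := add_le_add hεb.le hn.le
      _ = δ := ENNReal.add_halves δ
  -- FROM lintegral convergence to Bochner convergence
  have hIle : ∀ n, L n ≠ ⊤ →
      (∫ x, ∫ y, |Gd n x y| ^ p') ≤ (L n).toReal := by
    intro n hfin
    have hinner : ∀ x : EuclideanSpace ℝ (Fin N), 0 ≤ ∫ y, |Gd n x y| ^ p' := fun x =>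
      integral_nonneg fun y => Real.rpow_nonneg (abs_nonneg _) _
    calc (∫ x, ∫ y, |Gd n x y| ^ p')
        ≤ (∫⁻ x, ENNReal.ofReal (∫ y, |Gd n x y| ^ p')).toReal :=
          integral_le_toReal_lintegral hinner
      _ ≤ (L n).toReal := by
          refine ENNReal.toReal_mono hfin (lintegral_mono fun x => ?_)
          exact ofReal_integral_le_lintegral fun y => Real.rpow_nonneg (abs_nonneg _) _
  have hItoReal : Tendsto (fun n => (L n).toReal) atTop (𝓝 0) := by
    have := (ENNReal.tendsto_toReal (a := 0) (by simp)).comp hLtend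
    simpa [Function.comp_def] using this
  have hfin : ∀ᶠ n in atTop, L n < 1 :=
    hLtend.eventually_lt_const (by norm_num)
  refine tendsto_of_tendsto_of_tendsto_of_le_of_le' tendsto_const_nhds hItoReal
    (Eventually.of_forall fun n => integral_nonneg fun x =>
      integral_nonneg fun y => Real.rpow_nonneg (abs_nonneg _) _) ?_
  filter_upwards [hfin] with n hn
  exact hIle n (hn.trans ENNReal.one_lt_top).ne
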